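/- As α → ∞, ∫_{e^{-α}}^{1} r³ e^{(4/α) (log r)²} dr → 1/2. -/

import Mathlib

open MeasureTheory Real Filter

private lemma contg (α : ℝ) : Continuous (fun t : ℝ => Real.exp (4*t^2/α - 4*t)) := by
  fun_prop

private lemma intg (α a b : ℝ) :
    IntervalIntegrable (fun t : ℝ => Real.exp (4*t^2/α - 4*t)) volume a b :=
  (contg α).intervalIntegrable a b

private lemma int_exp_neg_mul (c : ℝ) (hc : c ≠ 0) (a b : ℝ) :
    ∫ t in a..b, Real.exp (-(c*t)) = (Real.exp (-(c*a)) - Real.exp (-(c*b)))/c := by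
  have hd : ∀ t ∈ Set.uIcc a b,
      HasDerivAt (fun t => -(Real.exp (-(c*t))/c)) (Real.exp (-(c*t))) t := by
    intro t _
    have h1 : HasDerivAt (fun t : ℝ => -(c*t)) (-c) t := by
      simpa [Pi.neg_def] using ((hasDerivAt_id t).const_mul c).neg
    have h2 := (Real.hasDerivAt_exp (-(c*t))).comp t h1
    have h3 : HasDerivAt (fun t => -(Real.exp (-(c*t))/c)) (-(Real.exp (-(c * t)) * -c / c)) t := (h2.div_const c).neg
    convert h3 using 1
    field_simp
  rw [intervalIntegral.integral_eq_sub_of_hasDerivAt hd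
    ((by fun_prop : Continuous (fun t : ℝ => Real.exp (-(c*t)))).intervalIntegrable a b)]
  ring

private lemma change_var (α : ℝ) (hα : 0 < α) :
    (∫ r in Real.exp (-α)..1, r ^ 3 * Real.exp ((4 / α) * (Real.log r) ^ 2))
      = ∫ t in (0:ℝ)..α, Real.exp (4*t^2/α - 4*t) := by
  have key := intervalIntegral.integral_comp_smul_deriv' (a := 0) (b := α)
    (f := fun t => Real.exp (-t)) (f' := fun t => -Real.exp (-t))
    (g := fun r => r ^ 3 * Real.exp ((4 / α) * (Real.log r) ^ 2))
    (fun x _ => by simpa using ((hasDerivAt_id x).neg.exp))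
    (by fun_prop)
    (by
      apply ContinuousOn.mono (s := Set.Ioi (0:ℝ))
      · exact (continuousOn_pow 3).mul
          (Real.continuous_exp.comp_continuousOn
            ((continuousOn_const.mul ((Real.continuousOn_log.mono
              (fun x hx => ne_of_gt hx)).pow 2))))
      · rintro y ⟨x, _, rfl⟩
        exact Real.exp_pos _)
  have h1 : ∀ x : ℝ, (-Real.exp (-x)) • ((fun r => r ^ 3 * Real.exp ((4 / α) * (Real.log r) ^ 2)) ∘ (fun t => Real.exp (-t))) x = -Real.exp (4*x^2/α - 4*x) := by
    intro x
    simp only [Function.comp, smul_eq_mul, Real.log_exp]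
    have e3 : Real.exp (-x) ^ 3 = Real.exp (-(3*x)) := by
      rw [← Real.exp_nat_mul]; norm_num
    rw [e3, ← Real.exp_add, neg_mul, ← Real.exp_add, neg_eq_iff_eq_neg, neg_neg]
    congr 1
    field_simp
    ring
  have keyL : (∫ x in (0:ℝ)..α, -Real.exp (4*x^2/α - 4*x))
      = ∫ r in (1:ℝ)..Real.exp (-α),
          (fun r => r ^ 3 * Real.exp ((4 / α) * (Real.log r) ^ 2)) r := by
    simp only [neg_zero, Real.exp_zero] at key
    rw [← key]
    apply intervalIntegral.integral_congr
    intro x _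
    exact (h1 x).symm
  rw [intervalIntegral.integral_symm (Real.exp (-α)) 1, intervalIntegral.integral_neg] at keyL
  have := neg_injective keyL
  exact this.symm

private lemma symm_eq (α : ℝ) (hα : 0 < α) :
    (∫ t in (0:ℝ)..α, Real.exp (4*t^2/α - 4*t))
      = 2 * ∫ t in (0:ℝ)..(α/2), Real.exp (4*t^2/α - 4*t) := by
  have hsplit := intervalIntegral.integral_add_adjacent_intervals (intg α 0 (α/2)) (intg α (α/2) α)
  have heq : ∀ x : ℝ, Real.exp (4*(α-x)^2/α - 4*(α-x)) = Real.exp (4*x^2/α - 4*x) := by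
    intro x; congr 1; field_simp; ring
  have hcomp : (∫ t in (0:ℝ)..(α/2), Real.exp (4*t^2/α - 4*t))
      = ∫ t in (α/2)..α, Real.exp (4*t^2/α - 4*t) :=
    calc (∫ t in (0:ℝ)..(α/2), Real.exp (4*t^2/α - 4*t))
        = ∫ t in (0:ℝ)..(α/2), Real.exp (4*(α-t)^2/α - 4*(α-t)) :=
          intervalIntegral.integral_congr fun x _ => (heq x).symm
      _ = ∫ t in (α - α/2)..(α - 0), Real.exp (4*t^2/α - 4*t) :=
          intervalIntegral.integral_comp_sub_left (fun t => Real.exp (4*t^2/α - 4*t)) α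
      _ = ∫ t in (α/2)..α, Real.exp (4*t^2/α - 4*t) := by
          rw [show α - α/2 = α/2 by ring, sub_zero]
  linarith [hsplit, hcomp]

private lemma lower_bd (α : ℝ) (hα : 0 < α) :
    (1 - Real.exp (-(2*α)))/2 ≤ ∫ t in (0:ℝ)..α, Real.exp (4*t^2/α - 4*t) := by
  rw [symm_eq α hα]
  have h1 : (∫ t in (0:ℝ)..(α/2), Real.exp (-(4*t)))
      ≤ ∫ t in (0:ℝ)..(α/2), Real.exp (4*t^2/α - 4*t) := by
    apply intervalIntegral.integral_mono_on (by linarith)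
      ((by fun_prop : Continuous (fun t : ℝ => Real.exp (-(4*t)))).intervalIntegrable _ _)
      (intg α _ _)
    intro t _
    apply Real.exp_le_exp.2
    have h2 : 0 ≤ 4*t^2/α := by positivity
    linarith
  rw [int_exp_neg_mul 4 (by norm_num)] at h1
  rw [show -(4*(α/2)) = -(2*α) by ring] at h1
  simp only [mul_zero, neg_zero, Real.exp_zero] at h1
  linarith

private lemma upper_bd (α : ℝ) (hα : 4 ≤ α) :
    (∫ t in (0:ℝ)..α, Real.exp (4*t^2/α - 4*t))
      ≤ 1/(2 - 2/Real.sqrt α) + Real.exp (-(2*Real.sqrt α)) := by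
  have hα0 : (0:ℝ) < α := by linarith
  set s := Real.sqrt α with hs
  have hs2 : s * s = α := Real.mul_self_sqrt (le_of_lt hα0)
  have hs_ge : 2 ≤ s := by
    have h4 : Real.sqrt 4 ≤ s := Real.sqrt_le_sqrt hα
    rw [show (4:ℝ) = 2^2 by norm_num, Real.sqrt_sq (by norm_num : (0:ℝ) ≤ 2)] at h4
    exact h4
  have hs0 : (0:ℝ) < s := by linarith
  have hs_half : s ≤ α/2 := by nlinarith
  rw [symm_eq α hα0]
  have hsplit := intervalIntegral.integral_add_adjacent_intervals (intg α 0 s) (intg α s (α/2))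
  set c : ℝ := 4 - 4/s with hc
  have hc_pos : 0 < c := by
    have : 4/s ≤ 2 := by rw [div_le_iff₀ hs0]; linarith
    simp only [hc]; linarith
  have hp1 : (∫ t in (0:ℝ)..s, Real.exp (4*t^2/α - 4*t))
      ≤ ∫ t in (0:ℝ)..s, Real.exp (-(c*t)) := by
    apply intervalIntegral.integral_mono_on (le_of_lt hs0) (intg α 0 s)
      ((by fun_prop : Continuous (fun t : ℝ => Real.exp (-(c*t)))).intervalIntegrable _ _)
    intro t ht
    obtain ⟨ht0, hts⟩ := ht
    apply Real.exp_le_exp.2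
    have key : 4*t^2/α ≤ 4*t/s := by
      rw [div_le_div_iff₀ hα0 hs0]
      nlinarith [mul_nonneg (mul_nonneg ht0 (sub_nonneg.2 hts)) (le_of_lt hs0)]
    have h4 : -(c*t) = -(4*t) + 4*t/s := by simp only [hc]; ring
    linarith
  have hp2 : (∫ t in s..(α/2), Real.exp (4*t^2/α - 4*t))
      ≤ ∫ t in s..(α/2), Real.exp (-(2*t)) := by
    apply intervalIntegral.integral_mono_on hs_half (intg α s (α/2))
      ((by fun_prop : Continuous (fun t : ℝ => Real.exp (-(2*t)))).intervalIntegrable _ _)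
    intro t ht
    obtain ⟨hts, htα⟩ := ht
    have ht0 : (0:ℝ) ≤ t := by linarith
    apply Real.exp_le_exp.2
    have key : 4*t^2/α ≤ 2*t := by
      rw [div_le_iff₀ hα0]; nlinarith
    linarith
  rw [int_exp_neg_mul c (ne_of_gt hc_pos)] at hp1
  rw [int_exp_neg_mul 2 (by norm_num)] at hp2
  have hv1 : (Real.exp (-(c*0)) - Real.exp (-(c*s)))/c ≤ 1/c := by
    rw [div_le_div_iff_of_pos_right hc_pos]
    have := Real.exp_nonneg (-(c*s))
    simp only [mul_zero, neg_zero, Real.exp_zero]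
    linarith
  have hv2 : (Real.exp (-(2*s)) - Real.exp (-(2*(α/2))))/2 ≤ Real.exp (-(2*s))/2 := by
    have := Real.exp_nonneg (-(2*(α/2)))
    linarith
  have hceq : 2/c = 1/(2 - 2/s) := by
    rw [hc, show (2:ℝ) - 2/s = (4 - 4/s)/2 by ring, one_div_div]
  have h2c : 2/c = 2*(1/c) := by ring
  linarith [hsplit, hp1, hp2, hv1, hv2]

private lemma sqrt_tendsto : Tendsto Real.sqrt atTop atTop := by
  apply tendsto_atTop_atTop.2
  intro b
  refine ⟨(max b 0)^2, fun a ha => ?_⟩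
  calc b ≤ max b 0 := le_max_left b 0
    _ = Real.sqrt ((max b 0)^2) := (Real.sqrt_sq (le_max_right b 0)).symm
    _ ≤ Real.sqrt a := Real.sqrt_le_sqrt ha

theorem integral_r3_exp_log_sq_tendsto :
    Tendsto
      (fun α : ℝ => ∫ r in (Real.exp (-α))..1, r ^ 3 * Real.exp ((4 / α) * (Real.log r) ^ 2))
      atTop (nhds (1 / 2)) := by
  have hL : Tendsto (fun α : ℝ => (1 - Real.exp (-(2*α)))/2) atTop (nhds (1/2)) := by
    have hexp : Tendsto (fun α : ℝ => Real.exp (-(2*α))) atTop (nhds 0) := by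
      apply Real.tendsto_exp_atBot.comp
      exact tendsto_neg_atTop_atBot.comp (tendsto_id.const_mul_atTop two_pos)
    have h : Tendsto (fun α : ℝ => (1 - Real.exp (-(2*α)))/2) atTop (nhds ((1 - 0)/2)) :=
      (Tendsto.sub tendsto_const_nhds hexp).div_const 2
    norm_num at h
    exact h
  have hS : Tendsto Real.sqrt atTop atTop := sqrt_tendsto
  have hU : Tendsto (fun α : ℝ => 1/(2 - 2/Real.sqrt α) + Real.exp (-(2*Real.sqrt α)))
      atTop (nhds (1/2)) := by
    have hinv : Tendsto (fun α : ℝ => 2/Real.sqrt α) atTop (nhds 0) :=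
      Tendsto.div_atTop tendsto_const_nhds hS
    have h2 : Tendsto (fun α : ℝ => 1/(2 - 2/Real.sqrt α)) atTop (nhds (1/(2 - 0))) :=
      Tendsto.div tendsto_const_nhds (Tendsto.sub tendsto_const_nhds hinv) (by norm_num)
    have h3 : Tendsto (fun α : ℝ => Real.exp (-(2*Real.sqrt α))) atTop (nhds 0) := by
      apply Real.tendsto_exp_atBot.comp
      exact tendsto_neg_atTop_atBot.comp (hS.const_mul_atTop two_pos)
    simpa using h2.add h3
  apply tendsto_of_tendsto_of_tendsto_of_le_of_le' hL hU
  · filter_upwards [eventually_ge_atTop (4:ℝ)] with α hα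
    rw [change_var α (by linarith)]
    exact lower_bd α (by linarith)
  · filter_upwards [eventually_ge_atTop (4:ℝ)] with α hα
    rw [change_var α (by linarith)]
    exact upper_bd α hα
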